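/- Let Σ be a non-empty alphabet and let 𝒫, 𝒩 be finite sets of parity automata over Σ. If there exists a non-empty finite word v ∈ Σ^+ such that the periodic word v^ω is accepted by every automaton in 𝒫 and rejected by every automaton in 𝒩, then there exists such a word v' with |v'| ≤ 2^k, where k := Σ_{A ∈ 𝒫∪𝒩} |Q_A|² · n_A and n_A := |π_A(Q_A)| is the number of distinct priorities of A. -/

import Mathlib

open scoped Classical

/-- A parity automaton over the alphabet `σ`: a finite non-empty set of states,
initial states, a transition function and a priority function. -/
structure PAut (σ : Type) where
  Q : Type
  [finQ : Fintype Q]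
  neQ : Nonempty Q
  I : Set Q
  δ : Q → σ → Set Q
  pri : Q → ℕ

attribute [instance] PAut.finQ

/-- A run of `A` on the infinite word `w`. -/
def IsRun {σ : Type} (A : PAut σ) (w : ℕ → σ) (ρ : ℕ → A.Q) : Prop :=
  ρ 0 ∈ A.I ∧ ∀ i, ρ (i + 1) ∈ A.δ (ρ i) (w i)

/-- The priority `n` occurs infinitely often along the run `ρ`. -/
def InfOcc {σ : Type} (A : PAut σ) (ρ : ℕ → A.Q) (n : ℕ) : Prop :=
  ∀ i, ∃ j, i ≤ j ∧ A.pri (ρ j) = n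

/-- `A` accepts the infinite word `w`: some run of `A` on `w` is such that the
maximal priority occurring infinitely often along it is even. -/
def PAccepts {σ : Type} (A : PAut σ) (w : ℕ → σ) : Prop :=
  ∃ ρ : ℕ → A.Q, IsRun A w ρ ∧
    ∃ n, InfOcc A ρ n ∧ Even n ∧ ∀ m, InfOcc A ρ m → m ≤ n

/-- The periodic infinite word `v^ω`. -/
def periodicWord {σ : Type} (v : List σ) (hv : v ≠ []) : ℕ → σ :=
  fun i => v.get ⟨i % v.length, Nat.mod_lt _ (List.length_pos_iff.mpr hv)⟩

/-- The number of distinct priorities of `A`. -/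
noncomputable def numPri {σ : Type} (A : PAut σ) : ℕ :=
  (Finset.univ.image A.pri).card

section Aux
variable {σ : Type}

/-- `v` repeated `n` times. -/
def repL (v : List σ) : ℕ → List σ
  | 0 => []
  | n + 1 => repL v n ++ v

lemma repL_length (v : List σ) (n : ℕ) : (repL v n).length = n * v.length := by
  induction n with
  | zero => simp [repL]
  | succ n ih => simp [repL, ih, Nat.succ_mul]

lemma repL_getElem (v : List σ) (n p : ℕ) (h : p < (repL v n).length)
    (h2 : p % v.length < v.length) :
    (repL v n)[p] = v[p % v.length] := by
  induction n with
  | zero => simp [repL] at h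
  | succ n ih =>
    rw [repL_length, Nat.succ_mul] at h
    by_cases hp : p < (repL v n).length
    · show (repL v n ++ v)[p]'_ = _
      refine (List.getElem_append_left hp).trans ?_
      exact ih hp
    · push_neg at hp
      show (repL v n ++ v)[p]'_ = _
      refine (List.getElem_append_right hp).trans ?_
      rw [repL_length] at hp
      have hmod : p % v.length = p - n * v.length := by
        conv_lhs => rw [show p = v.length * n + (p - n * v.length) by rw [Nat.mul_comm]; omega]
        rw [Nat.mul_add_mod]
        exact Nat.mod_eq_of_lt (by omega)
      simp only [repL_length]
      congr 1
      omega

/-- There is a path from `p` to `q` reading the finite word `u` whose maximal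
priority (among the states visited after each step) is `m` (`0` if `u = []`). -/
def prof (A : PAut σ) (u : List σ) (p q : A.Q) (m : ℕ) : Prop :=
  ∃ f : ℕ → A.Q, f 0 = p ∧ f u.length = q ∧
    (∀ i : ℕ, ∀ h : i < u.length, f (i + 1) ∈ A.δ (f i) (u[i]'h)) ∧
    m = (Finset.Icc 1 u.length).sup fun i => A.pri (f i)

lemma prof_nil (A : PAut σ) (p q : A.Q) (m : ℕ) :
    prof A [] p q m ↔ p = q ∧ m = 0 := by
  constructor
  · rintro ⟨f, h0, hl, _, hm⟩
    simp at hl hm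
    exact ⟨h0 ▸ hl ▸ rfl, by simpa using hm⟩
  · rintro ⟨rfl, rfl⟩
    exact ⟨fun _ => p, rfl, rfl, by simp, by simp⟩

lemma Icc_split (a b : ℕ) :
    Finset.Icc 1 (a + b) = Finset.Icc 1 a ∪ Finset.Icc (a + 1) (a + b) := by
  ext x; simp only [Finset.mem_Icc, Finset.mem_union]; omega

lemma sup_shift (g : ℕ → ℕ) (a b : ℕ) :
    (Finset.Icc (a + 1) (a + b)).sup g = (Finset.Icc 1 b).sup fun i => g (a + i) := by
  have : Finset.Icc (a + 1) (a + b) = (Finset.Icc 1 b).image (a + ·) := by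
    ext x
    simp only [Finset.mem_Icc, Finset.mem_image]
    constructor
    · intro h; exact ⟨x - a, by omega, by omega⟩
    · rintro ⟨y, hy, rfl⟩; omega
  rw [this, Finset.sup_image]
  rfl

lemma prof_append (A : PAut σ) (u w : List σ) (p q : A.Q) (m : ℕ) :
    prof A (u ++ w) p q m ↔
      ∃ r m1 m2, prof A u p r m1 ∧ prof A w r q m2 ∧ m = max m1 m2 := by
  constructor
  · rintro ⟨f, h0, hl, hs, hm⟩
    rw [List.length_append] at hl
    refine ⟨f u.length, _, _, ⟨f, h0, rfl, ?_, rfl⟩,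
      ⟨fun i => f (u.length + i), rfl, by simpa using hl, ?_, rfl⟩, ?_⟩
    · intro i h
      have := hs i (by rw [List.length_append]; omega)
      rwa [List.getElem_append_left h] at this
    · intro i h
      have h2 : u.length + i < (u ++ w).length := by rw [List.length_append]; omega
      have := hs (u.length + i) h2
      rw [List.getElem_append_right (by omega)] at this
      simpa [Nat.add_sub_cancel_left, Nat.add_assoc] using this
    · rw [hm, List.length_append, Icc_split, Finset.sup_union, sup_shift]
  · rintro ⟨r, m1, m2, ⟨f1, h10, h1l, h1s, h1m⟩, ⟨f2, h20, h2l, h2s, h2m⟩, hm⟩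
    refine ⟨fun i => if i < u.length then f1 i else f2 (i - u.length), ?_, ?_, ?_, ?_⟩
    · by_cases h : 0 < u.length
      · simpa [h] using h10
      · have hu0 : u.length = 0 := by omega
        have hrp : r = p := by rw [← h10, ← h1l, hu0]
        simpa [h] using h20.trans hrp
    · rw [List.length_append]
      have : ¬ (u.length + w.length < u.length) := by omega
      simp only [this, if_false, Nat.add_sub_cancel_left]
      exact h2l
    · intro i h
      rw [List.length_append] at h
      by_cases hi : i + 1 < u.length
      · have hi' : i < u.length := by omega
        simp only [hi, hi', if_pos]
        rw [List.getElem_append_left hi']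
        exact h1s i hi'
      · by_cases hi2 : i < u.length
        · have he : i + 1 = u.length := by omega
          have hval : f2 (i + 1 - u.length) = f1 (i + 1) := by
            rw [he, Nat.sub_self, h20, ← h1l]
          simp only [hi, if_false, hi2, if_pos, hval]
          rw [List.getElem_append_left hi2]
          exact h1s i hi2
        · have h3 : ¬ (i + 1 < u.length) := by omega
          simp only [hi2, h3, if_false]
          have h4 : i + 1 - u.length = (i - u.length) + 1 := by omega
          rw [h4, List.getElem_append_right (by omega)]
          exact h2s (i - u.length) (by omega)
    · rw [hm, h1m, h2m, List.length_append, Icc_split, Finset.sup_union, sup_shift]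
      congr 1
      · apply Finset.sup_congr rfl
        intro i hi
        simp only [Finset.mem_Icc] at hi
        by_cases h : i < u.length
        · simp [h]
        · have hiu : i = u.length := by omega
          simp only [hiu, lt_irrefl, if_false, Nat.sub_self, h20, h1l]
      · apply Finset.sup_congr rfl
        intro i hi
        simp only [Finset.mem_Icc] at hi
        have : ¬ (u.length + i < u.length) := by omega
        simp [this, Nat.add_sub_cancel_left]

lemma prof_mem_image (A : PAut σ) (u : List σ) (hu : u ≠ []) (p q : A.Q) (m : ℕ)
    (h : prof A u p q m) : m ∈ Finset.univ.image A.pri := by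
  obtain ⟨f, -, -, -, hm⟩ := h
  have hne : (Finset.Icc 1 u.length).Nonempty :=
    ⟨1, Finset.mem_Icc.2 ⟨le_refl 1, List.length_pos_iff.mpr hu⟩⟩
  obtain ⟨i, -, hieq⟩ := Finset.exists_mem_eq_sup _ hne fun i => A.pri (f i)
  rw [hm, hieq]
  exact Finset.mem_image_of_mem _ (Finset.mem_univ _)

lemma prof_congr_rep (A : PAut σ) (u w : List σ)
    (h : ∀ p q m, prof A u p q m ↔ prof A w p q m) (t : ℕ) :
    ∀ p q m, prof A (repL u t) p q m ↔ prof A (repL w t) p q m := by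
  induction t with
  | zero => intro p q m; exact Iff.rfl
  | succ t ih =>
    intro p q m
    show prof A (repL u t ++ u) _ _ _ ↔ prof A (repL w t ++ w) _ _ _
    rw [prof_append, prof_append]
    constructor <;> rintro ⟨r, m1, m2, h1, h2, rfl⟩
    · exact ⟨r, m1, m2, (ih _ _ _).1 h1, (h _ _ _).1 h2, rfl⟩
    · exact ⟨r, m1, m2, (ih _ _ _).2 h1, (h _ _ _).2 h2, rfl⟩

/-- The lasso-criterion for acceptance of `v^ω`. -/
def Crit (A : PAut σ) (v : List σ) : Prop :=
  ∃ q0 q i j m m', q0 ∈ A.I ∧ 1 ≤ j ∧ Even m ∧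
    prof A (repL v i) q0 q m' ∧ prof A (repL v j) q q m

lemma paccepts_iff_crit (A : PAut σ) (v : List σ) (hv : v ≠ []) :
    PAccepts A (periodicWord v hv) ↔ Crit A v := by
  have hL : 0 < v.length := List.length_pos_iff.mpr hv
  constructor
  · rintro ⟨ρ, ⟨hinit, hstep⟩, n, hocc, heven, hmax⟩
    -- a bound beyond which all priorities are ≤ n
    have hfin : ∀ c, ¬ InfOcc A ρ c → ∃ K, ∀ p, K ≤ p → A.pri (ρ p) ≠ c := by
      intro c hc
      unfold InfOcc at hc
      push_neg at hc
      obtain ⟨i, hi⟩ := hc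
      exact ⟨i, fun p hp => hi p hp⟩
    have hK : ∃ K, ∀ p, K ≤ p → A.pri (ρ p) ≤ n := by
      set S := (Finset.univ.image A.pri).filter (fun c => n < c) with hS
      set g : ℕ → ℕ := fun c => if h : ¬ InfOcc A ρ c then (hfin c h).choose else 0 with hg
      refine ⟨S.sup g, fun p hp => ?_⟩
      by_contra hgt
      push_neg at hgt
      have hmem : A.pri (ρ p) ∈ S :=
        Finset.mem_filter.2 ⟨Finset.mem_image_of_mem _ (Finset.mem_univ _), hgt⟩
      have hnocc : ¬ InfOcc A ρ (A.pri (ρ p)) := fun h => absurd (hmax _ h) (by omega)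
      have hgc : g (A.pri (ρ p)) = (hfin _ hnocc).choose := by
        rw [hg]; simp only [dif_pos hnocc]
      have hle : g (A.pri (ρ p)) ≤ p := le_trans (Finset.le_sup hmem) hp
      exact (hfin _ hnocc).choose_spec p (hgc ▸ hle) rfl
    obtain ⟨K, hK⟩ := hK
    -- a state occurring infinitely often at positions that are multiples of |v|
    obtain ⟨q, hq⟩ := Finite.exists_infinite_fiber (fun t => ρ (t * v.length))
    rw [Set.infinite_coe_iff] at hq
    have hq' : ∀ N, ∃ t, N ≤ t ∧ ρ (t * v.length) = q := by
      intro N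
      obtain ⟨t, ht, htN⟩ := hq.exists_gt N
      exact ⟨t, le_of_lt htN, ht⟩
    obtain ⟨t1, ht1K, ht1⟩ := hq' K
    obtain ⟨p0, hp0ge, hp0⟩ := hocc (t1 * v.length + 1)
    obtain ⟨t2, ht2p0, ht2⟩ := hq' p0
    have ht2L : p0 ≤ t2 * v.length := le_trans ht2p0 (Nat.le_mul_of_pos_right t2 hL)
    have ht12 : t1 < t2 := by
      have : t1 * v.length < t2 * v.length := by omega
      exact Nat.lt_of_mul_lt_mul_right this
    have hKt1 : K ≤ t1 * v.length := le_trans ht1K (Nat.le_mul_of_pos_right t1 hL)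
    -- letters of the periodic word
    have hletter : ∀ (t o p : ℕ) (h : p < (repL v t).length), o % v.length = 0 →
        (repL v t)[p] = periodicWord v hv (o + p) := by
      intro t o p h ho
      rw [repL_getElem v t p h (Nat.mod_lt _ hL)]
      have hmod : (o + p) % v.length = p % v.length := by
        rw [Nat.add_mod, ho, Nat.zero_add, Nat.mod_mod_of_dvd _ dvd_rfl]
      show _ = v.get _
      simp only [List.get_eq_getElem, hmod]
    refine ⟨ρ 0, q, t1, t2 - t1, n,
      (Finset.Icc 1 (repL v t1).length).sup fun i => A.pri (ρ i),
      hinit, by omega, heven, ⟨ρ, rfl, ?_, ?_, rfl⟩, ?_⟩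
    · rw [repL_length]; exact ht1
    · intro i h
      rw [hletter t1 0 i h (by simp)]
      simpa using hstep i
    · refine ⟨fun i => ρ (t1 * v.length + i), ht1, ?_, ?_, ?_⟩
      · show ρ _ = q
        rw [repL_length,
          show t1 * v.length + (t2 - t1) * v.length = t2 * v.length by
            rw [← Nat.add_mul]; congr 1; omega]
        exact ht2
      · intro i h
        rw [hletter (t2 - t1) (t1 * v.length) i h (Nat.mul_mod_left t1 v.length)]
        exact hstep _
      · refine (le_antisymm ?_ ?_).symm
        · apply Finset.sup_le
          intro i hi
          exact hK _ (by omega)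
        · have hsub : (t2 - t1) * v.length = t2 * v.length - t1 * v.length :=
            Nat.sub_mul t2 t1 v.length
          have hmem : p0 - t1 * v.length ∈ Finset.Icc 1 (repL v (t2 - t1)).length := by
            rw [repL_length]
            exact Finset.mem_Icc.2 ⟨by omega, by omega⟩
          calc n = A.pri (ρ (t1 * v.length + (p0 - t1 * v.length))) := by
                rw [show t1 * v.length + (p0 - t1 * v.length) = p0 by omega, hp0]
            _ ≤ _ := Finset.le_sup (f := fun i => A.pri (ρ (t1 * v.length + i))) hmem
  · rintro ⟨q0, q, i, j, m, m', hq0, hj, heven,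
      ⟨f1, h10, h1l, h1s, -⟩, ⟨f2, h20, h2l, h2s, h2m⟩⟩
    rw [repL_length] at h1l h2l
    have hb : 0 < j * v.length := Nat.mul_pos hj hL
    obtain ⟨a, ha⟩ : ∃ a, i * v.length = a := ⟨_, rfl⟩
    obtain ⟨b, hbe⟩ : ∃ b, j * v.length = b := ⟨_, rfl⟩
    rw [ha] at h1l
    rw [hbe] at h2l hb
    -- the infinite lasso run
    refine ⟨fun p => if p < a then f1 p else f2 ((p - a) % b), ⟨?_, ?_⟩, m, ?_, heven, ?_⟩
    · by_cases h0 : 0 < a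
      · simp only [if_pos h0, h10]; exact hq0
      · have ha0 : a = 0 := by omega
        have : q = q0 := by rw [← h10, ← h1l, ha0]
        simp only [ha0, lt_irrefl, if_false, Nat.sub_zero, Nat.zero_mod, h20, this]
        exact hq0
    · -- transitions
      have hpmod : ∀ p, a ≤ p → p % v.length = ((p - a) % b) % v.length := by
        intro p hp
        obtain ⟨s, hs⟩ : ∃ s, p - a = b * s + (p - a) % b :=
          ⟨(p - a) / b, by rw [Nat.div_add_mod]⟩
        have hp2 : p = v.length * (i + j * s) + (p - a) % b := by
          have h3 : p = i * v.length + (j * v.length * s + (p - a) % b) := by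
            rw [ha, hbe]; omega
          conv_lhs => rw [h3]
          ring
        conv_lhs => rw [hp2, Nat.mul_add_mod]
      have hlet : ∀ p r, a ≤ p → r = (p - a) % b → ∀ h : r < (repL v j).length,
          (repL v j)[r] = periodicWord v hv p := by
        intro p r hp hr h
        rw [repL_getElem v j r h (Nat.mod_lt _ hL)]
        show _ = v.get _
        simp only [List.get_eq_getElem]
        congr 1
        rw [hpmod p hp, hr]
      intro p
      by_cases hpa : p + 1 < a
      · have hp' : p < a := by omega
        simp only [hpa, hp', if_pos]
        have hplen : p < (repL v i).length := by rw [repL_length, ha]; omega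
        have := h1s p hplen
        rwa [repL_getElem v i p hplen (Nat.mod_lt _ hL)] at this
      · by_cases hp' : p < a
        · -- p + 1 = a
          have hpe : p + 1 = a := by omega
          have hval : f2 ((p + 1 - a) % b) = f1 (p + 1) := by
            rw [hpe, Nat.sub_self, Nat.zero_mod, h20, ← h1l]
          simp only [hpa, if_false, hp', if_pos, hval]
          have hplen : p < (repL v i).length := by rw [repL_length, ha]; omega
          have := h1s p hplen
          rwa [repL_getElem v i p hplen (Nat.mod_lt _ hL)] at this
        · -- a ≤ p
          push_neg at hp'
          have hnp1 : ¬ (p + 1 < a) := hpa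
          have hnp : ¬ (p < a) := by omega
          simp only [hnp1, hnp, if_false]
          have hr : (p - a) % b < b := Nat.mod_lt _ hb
          have hsucc : (p + 1 - a) % b = ((p - a) % b + 1) % b := by
            rw [show p + 1 - a = (p - a) + 1 by omega, Nat.add_mod]
            conv_rhs => rw [Nat.add_mod]
            rw [Nat.mod_mod_of_dvd _ dvd_rfl]
          have hrlen : (p - a) % b < (repL v j).length := by rw [repL_length, hbe]; exact hr
          have hstep2 := h2s ((p - a) % b) hrlen
          rw [hlet p ((p - a) % b) hp' rfl hrlen] at hstep2
          by_cases hrb : (p - a) % b + 1 < b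
          · rw [hsucc, Nat.mod_eq_of_lt hrb]
            exact hstep2
          · have hre : (p - a) % b + 1 = b := by omega
            rw [hsucc, hre, Nat.mod_self, h20, ← h2l]
            rw [hre] at hstep2
            exact hstep2
    · -- priority m occurs infinitely often
      have hne : (Finset.Icc 1 b).Nonempty := ⟨1, Finset.mem_Icc.2 ⟨le_refl 1, hb⟩⟩
      rw [repL_length, hbe] at h2m
      obtain ⟨i0, hi0, hi0eq⟩ := Finset.exists_mem_eq_sup _ hne fun i => A.pri (f2 i)
      rw [Finset.mem_Icc] at hi0
      have hm0 : A.pri (f2 (i0 % b)) = m := by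
        by_cases h : i0 < b
        · rw [Nat.mod_eq_of_lt h, h2m, hi0eq]
        · have : i0 = b := by omega
          rw [this, Nat.mod_self, h20, ← h2l, ← this, h2m, hi0eq]
      intro N
      refine ⟨a + b * N + i0 % b, le_trans (Nat.le_mul_of_pos_left N hb) (by omega), ?_⟩
      have h1 : ¬ (a + b * N + i0 % b < a) := by omega
      simp only [h1, if_false]
      rw [show a + b * N + i0 % b - a = b * N + i0 % b by omega, Nat.mul_add_mod,
        Nat.mod_mod_of_dvd _ dvd_rfl]
      exact hm0
    · -- maximality of m
      intro m2 hocc2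
      obtain ⟨p, hpge, hpe⟩ := hocc2 a
      have h1 : ¬ (p < a) := by omega
      rw [repL_length, hbe] at h2m
      simp only [h1, if_false] at hpe
      have hr : (p - a) % b < b := Nat.mod_lt _ hb
      by_cases hr1 : 1 ≤ (p - a) % b
      · rw [← hpe, h2m]
        exact Finset.le_sup (f := fun i => A.pri (f2 i)) (Finset.mem_Icc.2 ⟨hr1, le_of_lt hr⟩)
      · have hr0 : (p - a) % b = 0 := by omega
        rw [← hpe, hr0, h20, ← h2l, h2m]
        exact Finset.le_sup (f := fun i => A.pri (f2 i)) (Finset.mem_Icc.2 ⟨hb, le_refl b⟩)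

lemma crit_congr (A : PAut σ) (v w : List σ)
    (h : ∀ p q m, prof A v p q m ↔ prof A w p q m) : Crit A v ↔ Crit A w := by
  have h' : ∀ p q m, prof A w p q m ↔ prof A v p q m := fun p q m => (h p q m).symm
  constructor <;> rintro ⟨q0, q, i, j, m, m', h1, h2, h3, h4, h5⟩
  · exact ⟨q0, q, i, j, m, m', h1, h2, h3, (prof_congr_rep A v w h i _ _ _).1 h4,
      (prof_congr_rep A v w h j _ _ _).1 h5⟩
  · exact ⟨q0, q, i, j, m, m', h1, h2, h3, (prof_congr_rep A w v h' i _ _ _).1 h4,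
      (prof_congr_rep A w v h' j _ _ _).1 h5⟩

/-- The profile of a word, restricted to the priorities actually occurring. -/
abbrev ProfT (A : PAut σ) : Type :=
  A.Q → A.Q → {n // n ∈ Finset.univ.image A.pri} → Prop

lemma card_ProfT (A : PAut σ) :
    Fintype.card (ProfT A) = 2 ^ ((Fintype.card A.Q) ^ 2 * numPri A) := by
  rw [Fintype.card_fun, Fintype.card_fun, Fintype.card_fun, Fintype.card_prop,
    Fintype.card_coe, ← pow_mul, ← pow_mul]
  congr 1
  unfold numPri
  ring

/-- The combined profile of a word with respect to all automata in `S`. -/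
noncomputable def Phi (S : Finset (PAut σ)) (u : List σ) : (A : {x // x ∈ S}) → ProfT A.1 :=
  fun A p q n => prof A.1 u p q n.1

lemma card_Phi_type (S : Finset (PAut σ)) :
    Fintype.card ((A : {x // x ∈ S}) → ProfT A.1) =
      2 ^ (∑ A ∈ S, (Fintype.card A.Q) ^ 2 * numPri A) := by
  rw [Fintype.card_pi, Finset.univ_eq_attach]
  rw [Finset.prod_congr rfl fun A _ => card_ProfT A.1]
  rw [Finset.prod_attach S fun A => 2 ^ ((Fintype.card A.Q) ^ 2 * numPri A)]
  rw [← Finset.prod_pow_eq_pow_sum]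

lemma phi_eq_prof_iff (S : Finset (PAut σ)) (u w : List σ) (hu : u ≠ []) (hw : w ≠ [])
    (h : Phi S u = Phi S w) (A : PAut σ) (hA : A ∈ S) :
    ∀ p q m, prof A u p q m ↔ prof A w p q m := by
  intro p q m
  by_cases hm : m ∈ Finset.univ.image A.pri
  · exact iff_of_eq (congrFun (congrFun (congrFun (congrFun h ⟨A, hA⟩) p) q) ⟨m, hm⟩)
  · constructor
    · intro hp; exact absurd (prof_mem_image A u hu p q m hp) hm
    · intro hp; exact absurd (prof_mem_image A w hw p q m hp) hm

lemma shorten (S : Finset (PAut σ)) (v : List σ) (hv : v ≠ [])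
    (hlong : 2 ^ (∑ A ∈ S, (Fintype.card A.Q) ^ 2 * numPri A) < v.length) :
    ∃ w : List σ, w ≠ [] ∧ w.length < v.length ∧
      ∀ A ∈ S, ∀ p q m, prof A v p q m ↔ prof A w p q m := by
  have hcard : Fintype.card ((A : {x // x ∈ S}) → ProfT A.1) <
      (Finset.Icc 1 v.length).card := by
    rw [card_Phi_type, Nat.card_Icc]; omega
  rw [← Finset.card_univ] at hcard
  obtain ⟨i, hi, j, hj, hne, heq⟩ :=
    Finset.exists_ne_map_eq_of_card_lt_of_maps_to hcard
      (fun i _ => Finset.mem_univ (Phi S (v.take i)))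
  rw [Finset.mem_Icc] at hi hj
  obtain ⟨i, j, hij, hi, hj, heq⟩ : ∃ i j, i < j ∧ (1 ≤ i ∧ i ≤ v.length) ∧
      (1 ≤ j ∧ j ≤ v.length) ∧ Phi S (v.take i) = Phi S (v.take j) := by
    rcases hne.lt_or_gt with h' | h'
    · exact ⟨i, j, h', hi, hj, heq⟩
    · exact ⟨j, i, h', hj, hi, heq.symm⟩
  have htine : v.take i ≠ [] := by
    intro h
    have h2 : (v.take i).length = 0 := by rw [h]; rfl
    rw [List.length_take] at h2
    omega
  have htjne : v.take j ≠ [] := by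
    intro h
    have h2 : (v.take j).length = 0 := by rw [h]; rfl
    rw [List.length_take] at h2
    omega
  refine ⟨v.take i ++ v.drop j, by simp [htine], ?_, ?_⟩
  · rw [List.length_append, List.length_take, List.length_drop]
    omega
  · intro A hA p q m
    have hEq := phi_eq_prof_iff S (v.take j) (v.take i) htjne htine heq.symm A hA
    conv_lhs => rw [show v = v.take j ++ v.drop j from (List.take_append_drop j v).symm]
    rw [prof_append, prof_append]
    constructor <;> rintro ⟨r, m1, m2, h1, h2, rfl⟩
    exacts [⟨r, m1, m2, (hEq _ _ _).1 h1, h2, rfl⟩, ⟨r, m1, m2, (hEq _ _ _).2 h1, h2, rfl⟩]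

lemma exists_short (S : Finset (PAut σ)) :
    ∀ (n : ℕ) (v : List σ) (hv : v ≠ []), v.length = n →
    ∃ (w : List σ) (hw : w ≠ []),
      w.length ≤ 2 ^ (∑ A ∈ S, (Fintype.card A.Q) ^ 2 * numPri A) ∧
      ∀ A ∈ S, (PAccepts A (periodicWord w hw) ↔ PAccepts A (periodicWord v hv)) := by
  intro n
  induction n using Nat.strong_induction_on with
  | _ n ih =>
    intro v hv hvn
    by_cases hlong : 2 ^ (∑ A ∈ S, (Fintype.card A.Q) ^ 2 * numPri A) < v.length
    · obtain ⟨w, hw, hlt, hiff⟩ := shorten S v hv hlong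
      obtain ⟨w', hw', hlen', hiff'⟩ := ih w.length (by omega) w hw rfl
      refine ⟨w', hw', hlen', fun A hA => (hiff' A hA).trans ?_⟩
      rw [paccepts_iff_crit, paccepts_iff_crit]
      exact (crit_congr A w v fun p q m => ((hiff A hA p q m).symm))
    · exact ⟨v, hv, by omega, fun A hA => Iff.rfl⟩

end Aux

/-- **Lemma.** If some periodic word `v^ω` is accepted by every parity automaton of
`Pos` and rejected by every parity automaton of `Neg`, then there is such a `v'`
with `|v'| ≤ 2^k`, where `k = Σ_A |Q_A|² · n_A` and `n_A` is the number of
distinct priorities of `A`. -/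
theorem parity_periodic_word_length (σ : Type) (hσ : Nonempty σ)
    (Pos Neg : Finset (PAut σ)) :
    (∃ (v : List σ) (hv : v ≠ []),
        (∀ A ∈ Pos, PAccepts A (periodicWord v hv)) ∧
        (∀ A ∈ Neg, ¬ PAccepts A (periodicWord v hv))) →
    ∃ (v' : List σ) (hv' : v' ≠ []),
      v'.length ≤ 2 ^ (∑ A ∈ Pos ∪ Neg, (Fintype.card A.Q) ^ 2 * numPri A) ∧
      (∀ A ∈ Pos, PAccepts A (periodicWord v' hv')) ∧
      (∀ A ∈ Neg, ¬ PAccepts A (periodicWord v' hv')) := by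
  rintro ⟨v, hv, hPos, hNeg⟩
  obtain ⟨w, hw, hlen, hiff⟩ := exists_short (Pos ∪ Neg) v.length v hv rfl
  exact ⟨w, hw, hlen,
    fun A hA => (hiff A (Finset.mem_union_left _ hA)).2 (hPos A hA),
    fun A hA h => hNeg A hA ((hiff A (Finset.mem_union_right _ hA)).1 h)⟩
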